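/- For every n ≥ 1 and every R ≤ n there exists a set C ⊆ F₂ⁿ with log₂|C| ≤ n − log₂ V(n,R) + log₂ n such that every point of F₂ⁿ is within Hamming distance R of some element of C, where V(n,R) = Σ_{i=0}^{R} C(n,i). -/

import Mathlib

open Finset

section Aux

/-- The Hamming ball of radius `R` around `c`. -/
def hball (n R : ℕ) (c : Fin n → ZMod 2) : Finset (Fin n → ZMod 2) :=
  univ.filter (fun x => hammingDist x c ≤ R)

lemma hball_symm {n R : ℕ} (x c : Fin n → ZMod 2) : x ∈ hball n R c ↔ c ∈ hball n R x := by
  simp [hball, hammingDist_comm]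

lemma ball_lb (n R : ℕ) (c : Fin n → ZMod 2) :
    (∑ i ∈ range (R+1), n.choose i) ≤ (hball n R c).card := by
  classical
  set T : Finset (Finset (Fin n)) := (range (R+1)).biUnion (fun i => powersetCard i univ) with hT
  have hTcard : T.card = ∑ i ∈ range (R+1), n.choose i := by
    rw [hT, card_biUnion]
    · simp
    · intro a ha b hb hab
      simp only [disjoint_left]
      intro S hS hS'
      rw [mem_powersetCard] at hS hS'
      exact hab (hS.2 ▸ hS'.2.symm ▸ rfl)
  have hmem : ∀ S ∈ T, S.card ≤ R := by
    intro S hS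
    rw [hT, mem_biUnion] at hS
    obtain ⟨i, hi, hSi⟩ := hS
    rw [mem_powersetCard] at hSi
    rw [hSi.2]
    exact Nat.lt_succ_iff.mp (mem_range.mp hi)
  rw [← hTcard]
  apply card_le_card_of_injOn (fun S => fun i => c i + (if i ∈ S then 1 else 0))
  · intro S hS
    simp only [hball, coe_filter, mem_coe, mem_filter, mem_univ, true_and, Set.mem_setOf_eq]
    have h : (univ.filter fun i => (c i + (if i ∈ S then 1 else 0)) ≠ c i) = S := by
      ext i
      by_cases h : i ∈ S <;> simp [h]
    calc hammingDist (fun i => c i + (if i ∈ S then 1 else 0)) c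
        = (univ.filter fun i => (c i + (if i ∈ S then 1 else 0)) ≠ c i).card := rfl
      _ = S.card := by rw [h]
      _ ≤ R := hmem S hS
  · intro S _ S' _ h
    ext i
    have := congrFun h i
    by_cases h1 : i ∈ S <;> by_cases h2 : i ∈ S' <;> simp [h1, h2] at this ⊢

lemma double_count {n R : ℕ} (U : Finset (Fin n → ZMod 2)) :
    ∑ c : Fin n → ZMod 2, (U ∩ hball n R c).card = ∑ x ∈ U, (hball n R x).card := by
  classical
  have h1 : ∀ c, (U ∩ hball n R c).card = ∑ x ∈ U, if x ∈ hball n R c then 1 else 0 := by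
    intro c
    rw [← Finset.sum_filter, Finset.sum_const, smul_eq_mul, mul_one, Finset.filter_mem_eq_inter]
  simp_rw [h1]
  rw [Finset.sum_comm]
  congr 1
  ext x
  simp_rw [hball_symm x]
  rw [← Finset.sum_filter, Finset.sum_const, smul_eq_mul, mul_one]
  congr 1
  ext c
  simp [hball]

lemma averaging {n R : ℕ} (U : Finset (Fin n → ZMod 2)) (hU : U.Nonempty) :
    ∃ c, U.card * (∑ i ∈ range (R+1), n.choose i) ≤ 2^n * (U ∩ hball n R c).card := by
  classical
  by_contra h
  push_neg at h
  have hsum : U.card * (∑ i ∈ range (R+1), n.choose i) ≤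
      ∑ c : Fin n → ZMod 2, (U ∩ hball n R c).card := by
    rw [double_count]
    calc U.card * (∑ i ∈ range (R+1), n.choose i)
        = ∑ _x ∈ U, (∑ i ∈ range (R+1), n.choose i) := by
          rw [Finset.sum_const, smul_eq_mul]
      _ ≤ ∑ x ∈ U, (hball n R x).card := Finset.sum_le_sum (fun x _ => ball_lb n R x)
  have hlt : ∑ c : Fin n → ZMod 2, 2^n * (U ∩ hball n R c).card <
      ∑ _c : Fin n → ZMod 2, U.card * (∑ i ∈ range (R+1), n.choose i) :=
    Finset.sum_lt_sum_of_nonempty Finset.univ_nonempty (fun c _ => h c)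
  rw [← Finset.mul_sum, Finset.sum_const, smul_eq_mul, Finset.card_univ] at hlt
  have hcard : Fintype.card (Fin n → ZMod 2) = 2^n := by simp
  rw [hcard] at hlt
  have := mul_le_mul_right hsum (2^n)
  omega

lemma V_pos {n R : ℕ} : 0 < ∑ i ∈ range (R+1), n.choose i := by
  have h : n.choose 0 ≤ ∑ i ∈ range (R+1), n.choose i :=
    Finset.single_le_sum (fun i _ => Nat.zero_le _) (mem_range.mpr (Nat.succ_pos R))
  simpa using Nat.lt_of_lt_of_le (by simp) h

lemma V_le {n R : ℕ} (hR : R ≤ n) : ∑ i ∈ range (R+1), n.choose i ≤ 2^n := by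
  rw [← Nat.sum_range_choose n]
  exact Finset.sum_le_sum_of_subset (by simp [Finset.range_subset]; omega)

lemma greedy_ind {n R : ℕ} (hR : R ≤ n) :
    ∀ m : ℕ, ∀ U : Finset (Fin n → ZMod 2),
      (U.card : ℝ) * (1 - ((∑ i ∈ range (R+1), n.choose i : ℕ) : ℝ) / 2^n) ^ m < 1 →
      ∃ C : Finset (Fin n → ZMod 2), C.card ≤ m ∧ ∀ x ∈ U, ∃ c ∈ C, hammingDist x c ≤ R := by
  classical
  set V : ℕ := ∑ i ∈ range (R+1), n.choose i with hV
  have hVpos : 0 < V := V_pos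
  have hVle : V ≤ 2^n := V_le hR
  have hq0 : (0:ℝ) ≤ 1 - (V:ℝ)/2^n := by
    have h1 : (V:ℝ) ≤ 2^n := by exact_mod_cast hVle
    have h2 : (0:ℝ) < 2^n := by positivity
    rw [sub_nonneg, div_le_one h2]
    exact h1
  intro m
  induction m with
  | zero =>
    intro U hU
    refine ⟨∅, le_refl _, ?_⟩
    intro x hx
    exfalso
    simp only [pow_zero, mul_one] at hU
    have : (1:ℝ) ≤ U.card := by
      exact_mod_cast Nat.one_le_iff_ne_zero.mpr (Finset.card_ne_zero_of_mem hx)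
    linarith
  | succ m ih =>
    intro U hU
    rcases U.eq_empty_or_nonempty with rfl | hne
    · exact ⟨∅, by simp, by simp⟩
    · obtain ⟨c, hc⟩ := averaging U hne
      have hstep : ((U \ hball n R c).card : ℝ) ≤ (U.card : ℝ) * (1 - (V:ℝ)/2^n) := by
        have hcard : (U \ hball n R c).card = U.card - (U ∩ hball n R c).card :=
          Finset.card_sdiff_add_card_inter U (hball n R c) ▸ by omega
        have hle : (U ∩ hball n R c).card ≤ U.card := Finset.card_le_card (Finset.inter_subset_left)
        have h2 : (0:ℝ) < 2^n := by positivity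
        have hcR : ((U.card : ℝ) * V) / 2^n ≤ ((U ∩ hball n R c).card : ℝ) := by
          rw [div_le_iff₀ h2]
          calc ((U.card : ℝ) * V) ≤ (2^n * (U ∩ hball n R c).card : ℕ) := by exact_mod_cast hc
            _ = ((U ∩ hball n R c).card : ℝ) * 2^n := by push_cast; ring
        rw [hcard]
        push_cast [hle]
        have heq : (U.card:ℝ) * (1 - (V:ℝ)/2^n) = (U.card:ℝ) - (U.card:ℝ) * (V:ℝ) / 2^n := by ring
        rw [heq]
        linarith
      have hq : ((U \ hball n R c).card : ℝ) * (1 - (V:ℝ)/2^n) ^ m < 1 := by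
        calc ((U \ hball n R c).card : ℝ) * (1 - (V:ℝ)/2^n) ^ m
            ≤ ((U.card : ℝ) * (1 - (V:ℝ)/2^n)) * (1 - (V:ℝ)/2^n) ^ m :=
              mul_le_mul_of_nonneg_right hstep (pow_nonneg hq0 m)
          _ = (U.card : ℝ) * (1 - (V:ℝ)/2^n) ^ (m+1) := by ring
          _ < 1 := hU
      obtain ⟨C, hCcard, hCcov⟩ := ih _ hq
      refine ⟨insert c C, ?_, ?_⟩
      · calc (insert c C).card ≤ C.card + 1 := Finset.card_insert_le _ _
          _ ≤ m + 1 := by omega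
      · intro x hx
        by_cases hxc : x ∈ hball n R c
        · exact ⟨c, Finset.mem_insert_self _ _, by simpa [hball] using hxc⟩
        · obtain ⟨c', hc', hd⟩ := hCcov x (Finset.mem_sdiff.mpr ⟨hx, hxc⟩)
          exact ⟨c', Finset.mem_insert_of_mem hc', hd⟩

lemma subcube (n R : ℕ) (hn : 1 ≤ n) (hR : R ≤ n)
    (hV : (∑ i ∈ range (R+1), n.choose i) ≤ n * 2^R) :
    ∃ C : Finset (Fin n → ZMod 2),
      Real.logb 2 C.card ≤
        (n : ℝ) - Real.logb 2 (∑ i ∈ range (R + 1), (n.choose i : ℝ)) + Real.logb 2 n ∧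
      ∀ x : Fin n → ZMod 2, ∃ c ∈ C, hammingDist x c ≤ R := by
  classical
  set C : Finset (Fin n → ZMod 2) :=
    univ.filter (fun x => ∀ i : Fin n, (i:ℕ) < R → x i = 0) with hC
  have hcov : ∀ x : Fin n → ZMod 2, ∃ c ∈ C, hammingDist x c ≤ R := by
    intro x
    refine ⟨fun i => if (i:ℕ) < R then 0 else x i, ?_, ?_⟩
    · simp only [hC, mem_filter, mem_univ, true_and]
      intro i hi
      simp [hi]
    · have hsub : (univ.filter fun i : Fin n => x i ≠ (if (i:ℕ) < R then 0 else x i)) ⊆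
          univ.filter (fun i : Fin n => (i:ℕ) < R) := by
        intro i hi
        rw [mem_filter] at hi ⊢
        refine ⟨hi.1, ?_⟩
        by_contra h
        exact hi.2 (by simp [h])
      calc hammingDist x _ ≤ (univ.filter (fun i : Fin n => (i:ℕ) < R)).card :=
            Finset.card_le_card hsub
        _ ≤ (Finset.range R).card :=
            Finset.card_le_card_of_injOn (fun i => (i:ℕ))
              (fun i hi => by simpa using (mem_filter.mp hi).2)
              (fun a _ b _ h => Fin.val_injective h)
        _ = R := Finset.card_range R
  have hcard : C.card ≤ 2^(n-R) := by
    have : C.card ≤ (univ : Finset (Fin (n-R) → ZMod 2)).card := by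
      apply Finset.card_le_card_of_injOn
        (fun x => fun j : Fin (n-R) => x ⟨R + (j:ℕ), by omega⟩)
      · intro x _; exact mem_univ _
      · intro x hx y hy h
        simp only [hC, coe_filter, Set.mem_setOf_eq, mem_univ, true_and] at hx hy
        funext i
        by_cases hi : (i:ℕ) < R
        · rw [hx i hi, hy i hi]
        · have hj : (i:ℕ) - R < n - R := by omega
          have := congrFun h ⟨(i:ℕ) - R, hj⟩
          simpa [show R + ((i:ℕ) - R) = (i:ℕ) by omega, Fin.eta] using this
    simpa using this
  have hne : C.Nonempty := ⟨0, by simp [hC]⟩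
  refine ⟨C, ?_, hcov⟩
  have hVpos : 0 < ∑ i ∈ range (R+1), n.choose i := V_pos
  have hVcast : (∑ i ∈ range (R + 1), (n.choose i : ℝ))
      = ((∑ i ∈ range (R+1), n.choose i : ℕ) : ℝ) := by
    push_cast; ring
  rw [hVcast]
  have h1 : Real.logb 2 C.card ≤ (n : ℝ) - R := by
    calc Real.logb 2 C.card ≤ Real.logb 2 (2^(n-R)) := by
          apply (Real.logb_le_logb one_lt_two (by exact_mod_cast hne.card_pos) (by positivity)).mpr
          exact_mod_cast hcard
      _ = ((n-R : ℕ) : ℝ) := by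
          rw [show ((2:ℝ)^(n-R)) = (2:ℝ)^((n-R:ℕ):ℕ) from rfl, Real.logb_pow]
          simp
      _ = (n : ℝ) - R := by push_cast [hR]; ring
  have h2 : Real.logb 2 ((∑ i ∈ range (R+1), n.choose i : ℕ) : ℝ) ≤ Real.logb 2 n + R := by
    calc Real.logb 2 ((∑ i ∈ range (R+1), n.choose i : ℕ) : ℝ)
        ≤ Real.logb 2 ((n * 2^R : ℕ) : ℝ) := by
          apply (Real.logb_le_logb one_lt_two (by exact_mod_cast hVpos) (by positivity)).mpr
          exact_mod_cast hV
      _ = Real.logb 2 n + R := by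
          push_cast
          rw [Real.logb_mul (by positivity) (by positivity), Real.logb_pow]
          simp
  linarith

lemma greedy_final (n R : ℕ) (hn : 4 ≤ n) (hR : R ≤ n) :
    ∃ C : Finset (Fin n → ZMod 2),
      Real.logb 2 C.card ≤
        (n : ℝ) - Real.logb 2 (∑ i ∈ range (R + 1), (n.choose i : ℝ)) + Real.logb 2 n ∧
      ∀ x : Fin n → ZMod 2, ∃ c ∈ C, hammingDist x c ≤ R := by
  classical
  set V : ℕ := ∑ i ∈ range (R+1), n.choose i with hV
  have hVpos : 0 < V := V_pos
  have hVle : V ≤ 2^n := V_le hR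
  have hVr : (0:ℝ) < V := by exact_mod_cast hVpos
  have h2n : (0:ℝ) < 2^n := by positivity
  have hVler : (V:ℝ) ≤ 2^n := by exact_mod_cast hVle
  set a : ℝ := (n:ℝ) * Real.log 2 * 2^n / V with ha
  have ha0 : 0 ≤ a := by
    apply div_nonneg _ (le_of_lt hVr)
    have := Real.log_nonneg one_le_two
    positivity
  set k : ℕ := ⌊a⌋₊ + 1 with hk
  have hak : a < k := by exact_mod_cast Nat.lt_floor_add_one a
  have hmain : ((univ : Finset (Fin n → ZMod 2)).card : ℝ) * (1 - (V:ℝ)/2^n) ^ k < 1 := by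
    have hcard : ((univ : Finset (Fin n → ZMod 2)).card : ℝ) = 2^n := by
      rw [Finset.card_univ]
      simp [Fintype.card_fun]
    rw [hcard]
    have hq0 : (0:ℝ) ≤ 1 - (V:ℝ)/2^n := by
      rw [sub_nonneg, div_le_one h2n]; exact hVler
    have hqe : 1 - (V:ℝ)/2^n ≤ Real.exp (-((V:ℝ)/2^n)) := by
      have := Real.add_one_le_exp (-((V:ℝ)/2^n))
      linarith
    have hpow : (1 - (V:ℝ)/2^n) ^ k ≤ Real.exp (-((V:ℝ)/2^n)) ^ k :=
      pow_le_pow_left₀ hq0 hqe k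
    have hexp : Real.exp (-((V:ℝ)/2^n)) ^ k = Real.exp (-((k:ℝ) * ((V:ℝ)/2^n))) := by
      rw [← Real.exp_nat_mul]; ring_nf
    calc (2:ℝ)^n * (1 - (V:ℝ)/2^n) ^ k ≤ 2^n * Real.exp (-((k:ℝ) * ((V:ℝ)/2^n))) := by
          rw [← hexp]; exact mul_le_mul_of_nonneg_left hpow (le_of_lt h2n)
      _ = Real.exp ((n:ℝ) * Real.log 2 + (-((k:ℝ) * ((V:ℝ)/2^n)))) := by
          rw [Real.exp_add, ← Real.log_pow, Real.exp_log h2n]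
      _ < 1 := by
          rw [← Real.exp_zero]
          apply Real.exp_lt_exp.mpr
          have h1 : a * ((V:ℝ)/2^n) = (n:ℝ) * Real.log 2 := by
            rw [ha]; field_simp
          have h2 : a * ((V:ℝ)/2^n) < (k:ℝ) * ((V:ℝ)/2^n) := by
            apply mul_lt_mul_of_pos_right hak (by positivity)
          linarith
  obtain ⟨C, hCk, hCcov⟩ := greedy_ind hR k univ hmain
  have hcov : ∀ x : Fin n → ZMod 2, ∃ c ∈ C, hammingDist x c ≤ R :=
    fun x => hCcov x (mem_univ x)
  have hCne : C.Nonempty := by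
    obtain ⟨c, hc, _⟩ := hcov 0
    exact ⟨c, hc⟩
  refine ⟨C, ?_, hcov⟩
  have hVcast : (∑ i ∈ range (R + 1), (n.choose i : ℝ)) = ((V : ℕ) : ℝ) := by
    rw [hV]; push_cast; ring
  rw [hVcast]
  have hb4 : (4:ℝ) ≤ (n:ℝ) * 2^n / V := by
    rw [le_div_iff₀ hVr]
    calc (4:ℝ) * V ≤ (n:ℝ) * V := by
          apply mul_le_mul_of_nonneg_right _ (le_of_lt hVr)
          exact_mod_cast hn
      _ ≤ (n:ℝ) * 2^n := by
          apply mul_le_mul_of_nonneg_left hVler (by positivity)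
  have hklee : (k:ℝ) ≤ (n:ℝ) * 2^n / V := by
    have hfloor : (⌊a⌋₊ : ℝ) ≤ a := Nat.floor_le ha0
    have hkk : (k:ℝ) = (⌊a⌋₊ : ℝ) + 1 := by rw [hk]; push_cast; ring
    have hlog : Real.log 2 ≤ 0.6931471808 := le_of_lt Real.log_two_lt_d9
    have hlognn : 0 ≤ Real.log 2 := Real.log_nonneg one_le_two
    set b : ℝ := (n:ℝ) * 2^n / V with hb
    have hab : a = Real.log 2 * b := by rw [ha, hb]; ring
    rw [hkk]
    have : a + 1 ≤ b := by
      rw [hab]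
      nlinarith
    linarith [hfloor]
  calc Real.logb 2 C.card ≤ Real.logb 2 ((n:ℝ) * 2^n / V) := by
        apply (Real.logb_le_logb one_lt_two (by exact_mod_cast hCne.card_pos) (by positivity)).mpr
        calc (C.card : ℝ) ≤ (k : ℝ) := by exact_mod_cast hCk
          _ ≤ _ := hklee
    _ = (n : ℝ) - Real.logb 2 (V:ℝ) + Real.logb 2 n := by
        rw [Real.logb_div (by positivity) (ne_of_gt hVr),
          Real.logb_mul (by positivity) (by positivity), Real.logb_pow]
        simp [Real.logb_self_eq_one]
        ring

end Aux

theorem stmt_9 (n R : ℕ) (hn : 1 ≤ n) (hR : R ≤ n) :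
    ∃ C : Finset (Fin n → ZMod 2),
      Real.logb 2 C.card ≤
        (n : ℝ) - Real.logb 2 (∑ i ∈ Finset.range (R + 1), (n.choose i : ℝ)) + Real.logb 2 n ∧
      ∀ x : Fin n → ZMod 2, ∃ c ∈ C, hammingDist x c ≤ R := by
  rcases le_or_gt 4 n with h4 | h4
  · exact greedy_final n R h4 hR
  · apply subcube n R hn hR
    interval_cases n <;> interval_cases R <;> decide
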